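/- For the association alternative with ε = √3/12, the arc probability μ_A(r, √3/12) := P(X₂ ∈ N^r(X₁)), for X₁, X₂ independent uniform on T(y₁,√3/4) ∪ T(y₂,√3/4) ∪ T(y₃,√3/4), satisfies: μ_A(r,√3/12) = (6r⁴ − 16r³ + 18r² − 5)/(18r²) for r ∈ [1, 2), and μ_A(r,√3/12) = 1 − (37/18)r⁻² for r ∈ [2, ∞). -/

import Mathlib

open MeasureTheory Real Set

noncomputable section

/-- The z-component of the cross product of two planar vectors. -/
def cross (u v : ℝ × ℝ) : ℝ := u.1 * v.2 - u.2 * v.1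

/-- Barycentric coordinates of `x` with respect to the triangle with
vertices `a`, `b`, `c`. -/
def bary (a b c x : ℝ × ℝ) : Fin 3 → ℝ := fun i =>
  if i = 1 then cross (x - a) (c - a) / cross (b - a) (c - a)
  else if i = 2 then cross (b - a) (x - a) / cross (b - a) (c - a)
  else 1 - cross (x - a) (c - a) / cross (b - a) (c - a)
    - cross (b - a) (x - a) / cross (b - a) (c - a)

/-- The closed triangle with vertices `a`, `b`, `c` (the set of points with
nonnegative barycentric coordinates). -/
def tri (a b c : ℝ × ℝ) : Set (ℝ × ℝ) := {x | ∀ i : Fin 3, 0 ≤ bary a b c x i}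

/-- The least index maximizing the barycentric coordinates of `x`. -/
def jmax (a b c x : ℝ × ℝ) : Fin 3 :=
  if bary a b c x 1 ≤ bary a b c x 0 ∧ bary a b c x 2 ≤ bary a b c x 0 then 0
  else if bary a b c x 2 ≤ bary a b c x 1 then 1 else 2

/-- The `r`-factor proximity region of `x` in the triangle with vertices `a`, `b`, `c`:
`N^r(x) = {z ∈ T : 1 − β_{j(x)}(z) ≤ r (1 − β_{j(x)}(x))}`. -/
def prox (a b c : ℝ × ℝ) (r : ℝ) (x : ℝ × ℝ) : Set (ℝ × ℝ) :=
  {z | z ∈ tri a b c ∧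
    1 - bary a b c z (jmax a b c x) ≤ r * (1 - bary a b c x (jmax a b c x))}

/-- The uniform probability measure on `s ⊆ ℝ²` (normalized Lebesgue measure). -/
def unif (s : Set (ℝ × ℝ)) : Measure (ℝ × ℝ) := (volume s)⁻¹ • volume.restrict s

def y1 : ℝ × ℝ := (0, 0)
def y2 : ℝ × ℝ := (1, 0)
def y3 : ℝ × ℝ := (1 / 2, Real.sqrt 3 / 2)

/-- The standard equilateral triangle. -/
def T : Set (ℝ × ℝ) := tri y1 y2 y3

/-- The `r`-factor proximity region in the standard triangle. -/
def N (r : ℝ) (x : ℝ × ℝ) : Set (ℝ × ℝ) := prox y1 y2 y3 r x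

/-- The null arc probability `μ(r) = P(X₂ ∈ N^r(X₁))` for independent uniform
points in the standard triangle. -/
def mu (r : ℝ) : ℝ := (((unif T).prod (unif T)) {p | p.2 ∈ N r p.1}).toReal

/-- The corner triangle at vertex `y₁`. -/
def corner1 (e : ℝ) : Set (ℝ × ℝ) := {p ∈ T | (Real.sqrt 3 * p.1 + p.2) / 2 ≤ e}

/-- The corner triangle at vertex `y₂`. -/
def corner2 (e : ℝ) : Set (ℝ × ℝ) := {p ∈ T | (Real.sqrt 3 * (1 - p.1) + p.2) / 2 ≤ e}

/-- The corner triangle at vertex `y₃`. -/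
def corner3 (e : ℝ) : Set (ℝ × ℝ) := {p ∈ T | Real.sqrt 3 / 2 - p.2 ≤ e}

/-- The support of the segregation alternative `H^S_ε`. -/
def Tseg (e : ℝ) : Set (ℝ × ℝ) := T \ (corner1 e ∪ corner2 e ∪ corner3 e)

/-- The support of the association alternative `H^A_ε`. -/
def Tass (e : ℝ) : Set (ℝ × ℝ) :=
  corner1 (Real.sqrt 3 / 3 - e) ∪ corner2 (Real.sqrt 3 / 3 - e) ∪
    corner3 (Real.sqrt 3 / 3 - e)

/-- The arc probability under the association alternative. -/
def muA (r e : ℝ) : ℝ :=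
  (((unif (Tass e)).prod (unif (Tass e))) {p | p.2 ∈ N r p.1}).toReal

open ENNReal
namespace AP

abbrev lmap (a b c d : ℝ) : (ℝ×ℝ) →ₗ[ℝ] (ℝ×ℝ) :=
  Matrix.toLin (Module.Basis.finTwoProd ℝ) (Module.Basis.finTwoProd ℝ) !![a,b;c,d]

lemma lmap_apply (a b c d : ℝ) (x : ℝ×ℝ) : lmap a b c d x = (a*x.1+b*x.2, c*x.1+d*x.2) :=
  Matrix.toLin_finTwoProd_apply a b c d x

lemma lmap_det (a b c d : ℝ) : LinearMap.det (lmap a b c d) = a*d - b*c := by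
  rw [LinearMap.det_toLin]; simp [Matrix.det_fin_two_of]

lemma lmap_cont (a b c d : ℝ) : Continuous (lmap a b c d) :=
  (lmap a b c d).continuous_of_finiteDimensional

lemma vol_preimage_lmap (a b c d : ℝ) (h : a*d - b*c ≠ 0) (s : Set (ℝ×ℝ)) :
    volume (lmap a b c d ⁻¹' s) = ENNReal.ofReal |(a*d-b*c)⁻¹| * volume s := by
  rw [Measure.addHaar_preimage_linearMap volume (by rw [lmap_det]; exact h), lmap_det]

lemma map_lmap_vol (a b c d : ℝ) (h : a*d-b*c ≠ 0) :
    Measure.map (lmap a b c d) volume = ENNReal.ofReal |(a*d-b*c)⁻¹| • volume := by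
  rw [Measure.map_linearMap_addHaar_eq_smul_addHaar volume (by rw [lmap_det]; exact h), lmap_det]

lemma setLIntegral_lmap (a b c d : ℝ) (h : a*d-b*c ≠ 0)
    (g : ℝ×ℝ → ℝ≥0∞) (hg : Measurable g) {S : Set (ℝ×ℝ)} (hS : MeasurableSet S) :
    ∫⁻ q in (lmap a b c d) ⁻¹' S, g (lmap a b c d q) ∂volume
      = ENNReal.ofReal |(a*d-b*c)⁻¹| * ∫⁻ p in S, g p ∂volume := by
  rw [← setLIntegral_map hS hg (lmap_cont a b c d).measurable, map_lmap_vol a b c d h,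
    Measure.restrict_smul, lintegral_smul_measure, smul_eq_mul]

lemma map_affine_vol (a b c d : ℝ) (v : ℝ×ℝ) (h : |a*d-b*c| = 1) :
    Measure.map (fun p => lmap a b c d p + v) volume = volume := by
  have hd : a*d-b*c ≠ 0 := by intro h0; rw [h0] at h; simp at h
  have hcomp : (fun p : ℝ×ℝ => lmap a b c d p + v) = (fun q => q + v) ∘ (lmap a b c d) := rfl
  rw [hcomp, ← Measure.map_map (measurable_add_const v) (lmap_cont a b c d).measurable,
    map_lmap_vol a b c d hd]
  have h1 : |(a*d-b*c)⁻¹| = 1 := by rw [abs_inv, h]; norm_num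
  rw [h1, ENNReal.ofReal_one, one_smul]
  exact (measurePreserving_add_right volume v).map_eq

lemma setLIntegral_affine (a b c d : ℝ) (v : ℝ×ℝ) (h : |a*d-b*c| = 1)
    (g : ℝ×ℝ → ℝ≥0∞) (hg : Measurable g) {S : Set (ℝ×ℝ)} (hS : MeasurableSet S) :
    ∫⁻ q in (fun p => lmap a b c d p + v) ⁻¹' S, g (lmap a b c d q + v) ∂volume
      = ∫⁻ p in S, g p ∂volume := by
  have hm : Measurable (fun p : ℝ×ℝ => lmap a b c d p + v) :=
    (measurable_add_const v).comp (lmap_cont a b c d).measurable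
  conv_rhs => rw [← map_affine_vol a b c d v h]
  rw [setLIntegral_map hS hg hm]

lemma corner_lintegral (c : ℝ) (g : ℝ → ℝ≥0∞) (hg : Measurable g) :
    ∫⁻ p in {p : ℝ×ℝ | 0 ≤ p.1 ∧ 0 ≤ p.2 ∧ p.1 + p.2 ≤ c}, g (p.1+p.2) ∂volume
      = ∫⁻ t in Icc 0 c, ENNReal.ofReal t * g t ∂volume := by
  have hS : MeasurableSet {p : ℝ×ℝ | 0 ≤ p.1 ∧ 0 ≤ p.2 ∧ p.1 + p.2 ≤ c} := by
    refine (measurableSet_le measurable_const measurable_fst).inter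
      ((measurableSet_le measurable_const measurable_snd).inter
      (measurableSet_le (measurable_fst.add measurable_snd) measurable_const))
  have hgm : Measurable (fun p : ℝ×ℝ => g (p.1+p.2)) := hg.comp (measurable_fst.add measurable_snd)
  have key := setLIntegral_lmap 1 (-1) 0 1 (by norm_num) (fun p => g (p.1+p.2)) hgm hS
  have hpre : (lmap 1 (-1) 0 1) ⁻¹' {p : ℝ×ℝ | 0 ≤ p.1 ∧ 0 ≤ p.2 ∧ p.1 + p.2 ≤ c}
      = {q : ℝ×ℝ | q.1 ∈ Icc 0 c ∧ q.2 ∈ Icc 0 q.1} := by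
    ext q
    simp only [mem_preimage, lmap_apply, mem_setOf_eq, mem_Icc]
    constructor
    · rintro ⟨h1, h2, h3⟩; refine ⟨⟨by linarith, by linarith⟩, by linarith, by linarith⟩
    · rintro ⟨⟨h1, h2⟩, h3, h4⟩; refine ⟨by linarith, by linarith, by linarith⟩
  rw [hpre] at key
  have hval : ∀ q : ℝ×ℝ, ((lmap 1 (-1) 0 1 q).1 + (lmap 1 (-1) 0 1 q).2) = q.1 := by
    intro q; rw [lmap_apply]; ring
  simp only [hval] at key
  rw [show |(1*1 - (-1)*0 : ℝ)⁻¹| = 1 by norm_num, ENNReal.ofReal_one, one_mul] at key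
  rw [← key]
  -- now compute ∫⁻ q in A, g q.1
  have hA : MeasurableSet {q : ℝ×ℝ | q.1 ∈ Icc 0 c ∧ q.2 ∈ Icc 0 q.1} := by
    refine MeasurableSet.inter ?_ ?_
    · exact measurable_fst measurableSet_Icc
    · refine (measurableSet_le measurable_const measurable_snd).inter
        (measurableSet_le measurable_snd measurable_fst)
  rw [← lintegral_indicator hA, Measure.volume_eq_prod ℝ ℝ, lintegral_prod]
  · have hinner : ∀ x : ℝ,
        (∫⁻ y, ({q : ℝ×ℝ | q.1 ∈ Icc 0 c ∧ q.2 ∈ Icc 0 q.1}.indicator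
          (fun q => g q.1) (x, y)) ∂volume)
        = (Icc (0:ℝ) c).indicator (fun x => ENNReal.ofReal x * g x) x := by
      intro x
      by_cases hx : x ∈ Icc (0:ℝ) c
      · have heq : (fun y : ℝ => ({q : ℝ×ℝ | q.1 ∈ Icc 0 c ∧ q.2 ∈ Icc 0 q.1}.indicator
            (fun q => g q.1) (x, y))) = (Icc (0:ℝ) x).indicator (fun _ => g x) := by
          funext y
          by_cases hy : y ∈ Icc (0:ℝ) x
          · rw [indicator_of_mem (by exact ⟨hx, hy⟩), indicator_of_mem hy]
          · rw [indicator_of_notMem (by intro hmem; exact hy hmem.2),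
              indicator_of_notMem hy]
        rw [heq, lintegral_indicator measurableSet_Icc, setLIntegral_const, Real.volume_Icc,
          indicator_of_mem hx, mul_comm]
        congr 1
        rw [sub_zero]
      · have heq : (fun y : ℝ => ({q : ℝ×ℝ | q.1 ∈ Icc 0 c ∧ q.2 ∈ Icc 0 q.1}.indicator
            (fun q => g q.1) (x, y))) = fun _ => 0 := by
          funext y
          exact indicator_of_notMem (by intro hmem; exact hx hmem.1) _
        rw [heq, lintegral_zero, indicator_of_notMem hx]
    simp only [hinner]
    rw [lintegral_indicator measurableSet_Icc]
  · exact ((hg.comp measurable_fst).indicator hA).aemeasurable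



lemma lint_Ioc_eq (a b : ℝ) (hab : a ≤ b) (f : ℝ → ℝ) (hf : Continuous f)
    (h0 : ∀ x ∈ Icc a b, 0 ≤ f x) :
    ∫⁻ t in Ioc a b, ENNReal.ofReal (f t) ∂volume = ENNReal.ofReal (∫ t in a..b, f t) := by
  rw [← ofReal_integral_eq_lintegral_ofReal]
  · rw [intervalIntegral.integral_of_le hab]
  · exact (hf.integrableOn_Icc).mono_set Ioc_subset_Icc_self
  · exact (ae_restrict_iff' measurableSet_Ioc).2
      (ae_of_all _ fun x hx => h0 x (Ioc_subset_Icc_self hx))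

lemma lint_Icc_eq (a b : ℝ) (hab : a ≤ b) (f : ℝ → ℝ) (hf : Continuous f)
    (h0 : ∀ x ∈ Icc a b, 0 ≤ f x) :
    ∫⁻ t in Icc a b, ENNReal.ofReal (f t) ∂volume = ENNReal.ofReal (∫ t in a..b, f t) := by
  rw [Measure.restrict_congr_set Ioc_ae_eq_Icc.symm]
  exact lint_Ioc_eq a b hab f hf h0

lemma lint_split (a m b : ℝ) (ham : a ≤ m) (hmb : m ≤ b) (f : ℝ → ℝ≥0∞) :
    ∫⁻ t in Icc a b, f t ∂volume
      = (∫⁻ t in Icc a m, f t ∂volume) + ∫⁻ t in Ioc m b, f t ∂volume := by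
  rw [← Icc_union_Ioc_eq_Icc ham hmb, lintegral_union measurableSet_Ioc]
  rw [Set.disjoint_left]
  rintro x ⟨_, h1⟩ ⟨h2, _⟩
  exact absurd h1 (not_le.2 h2)

lemma lint_split3 (a m k b : ℝ) (ham : a ≤ m) (hmk : m ≤ k) (hkb : k ≤ b) (f : ℝ → ℝ≥0∞) :
    ∫⁻ t in Icc a b, f t ∂volume
      = ((∫⁻ t in Icc a m, f t ∂volume) + ∫⁻ t in Ioc m k, f t ∂volume)
        + ∫⁻ t in Ioc k b, f t ∂volume := by
  rw [lint_split a m b ham (le_trans hmk hkb), ← Ioc_union_Ioc_eq_Ioc hmk hkb,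
    lintegral_union measurableSet_Ioc, add_assoc]
  rw [Set.disjoint_left]
  rintro x ⟨_, h1⟩ ⟨h2, _⟩
  exact absurd h1 (not_le.2 h2)

lemma ftc_cubic (a b A B C D : ℝ) :
    ∫ t in a..b, (A + B*t + C*t^2 + D*t^3)
      = (A*b + B/2*b^2 + C/3*b^3 + D/4*b^4) - (A*a + B/2*a^2 + C/3*a^3 + D/4*a^4) := by
  have h : ∀ t ∈ uIcc a b,
      HasDerivAt (fun t => A*t^1 + B/2*t^2 + C/3*t^3 + D/4*t^4) (A + B*t + C*t^2 + D*t^3) t := by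
    intro t _
    have h1 := (hasDerivAt_pow 1 t).const_mul A
    have h2 := (hasDerivAt_pow 2 t).const_mul (B/2)
    have h3 := (hasDerivAt_pow 3 t).const_mul (C/3)
    have h4 := (hasDerivAt_pow 4 t).const_mul (D/4)
    have h5 := ((h1.add h2).add h3).add h4
    refine h5.congr_deriv ?_
    push_cast
    ring
  have hint : IntervalIntegrable (fun t => A + B*t + C*t^2 + D*t^3) volume a b := by
    apply Continuous.intervalIntegrable
    continuity
  rw [intervalIntegral.integral_eq_sub_of_hasDerivAt h hint]
  ring

end AP
namespace AP
lemma area_tri (c : ℝ) (hc : 0 ≤ c) :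
    volume {p : ℝ×ℝ | 0 ≤ p.1 ∧ 0 ≤ p.2 ∧ p.1 + p.2 ≤ c} = ENNReal.ofReal (c^2/2) := by
  have h := corner_lintegral c (fun _ => 1) measurable_const
  simp only [mul_one] at h
  rw [setLIntegral_one] at h
  rw [h, lint_Icc_eq 0 c hc (fun t => t) continuous_id (fun x hx => hx.1)]
  rw [integral_id]
  norm_num

lemma area_tri' (a b c : ℝ) (h : a + b ≤ c) :
    volume {p : ℝ×ℝ | a ≤ p.1 ∧ b ≤ p.2 ∧ p.1 + p.2 ≤ c} = ENNReal.ofReal ((c-a-b)^2/2) := by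
  have hset : {p : ℝ×ℝ | a ≤ p.1 ∧ b ≤ p.2 ∧ p.1 + p.2 ≤ c}
      = (fun p : ℝ×ℝ => p + (-a,-b)) ⁻¹' {q : ℝ×ℝ | 0 ≤ q.1 ∧ 0 ≤ q.2 ∧ q.1 + q.2 ≤ c-a-b} := by
    ext p
    simp only [mem_preimage, mem_setOf_eq, Prod.fst_add, Prod.snd_add]
    constructor
    · rintro ⟨h1,h2,h3⟩; exact ⟨by linarith, by linarith, by linarith⟩
    · rintro ⟨h1,h2,h3⟩; exact ⟨by linarith, by linarith, by linarith⟩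
  rw [hset, measure_preimage_add_right, area_tri _ (by linarith)]
end AP

namespace AP
lemma s3pos : (0:ℝ) < Real.sqrt 3 := Real.sqrt_pos.2 (by norm_num)
lemma s3ne : Real.sqrt 3 ≠ 0 := ne_of_gt s3pos
lemma s3mul : Real.sqrt 3 * Real.sqrt 3 = 3 := Real.mul_self_sqrt (by norm_num)

def Φ : (ℝ×ℝ) →ₗ[ℝ] (ℝ×ℝ) := lmap 1 (-(Real.sqrt 3)⁻¹) 0 (2*(Real.sqrt 3)⁻¹)

lemma Φ_apply (x : ℝ×ℝ) : Φ x = (x.1 - x.2/Real.sqrt 3, 2*x.2/Real.sqrt 3) := by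
  have h := s3ne
  rw [Φ, lmap_apply, Prod.mk.injEq]
  constructor <;> (field_simp; try ring)

lemma bary_one (x : ℝ×ℝ) : bary y1 y2 y3 x 1 = (Φ x).1 := by
  have h := s3ne
  rw [Φ_apply]
  simp only [bary, cross, y1, y2, y3, Prod.fst_sub, Prod.snd_sub, reduceIte]
  field_simp
  ring

lemma bary_two (x : ℝ×ℝ) : bary y1 y2 y3 x 2 = (Φ x).2 := by
  have h := s3ne
  rw [Φ_apply]
  simp only [bary, cross, y1, y2, y3, Prod.fst_sub, Prod.snd_sub, Fin.reduceEq, reduceIte]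
  field_simp
  ring

lemma bary_zero (x : ℝ×ℝ) : bary y1 y2 y3 x 0 = 1 - (Φ x).1 - (Φ x).2 := by
  have h := s3ne
  rw [Φ_apply]
  simp only [bary, cross, y1, y2, y3, Prod.fst_sub, Prod.snd_sub, Fin.reduceEq, reduceIte]
  field_simp
  ring

-- ## β-space sets
def C1β : Set (ℝ×ℝ) := {b | 0 ≤ b.1 ∧ 0 ≤ b.2 ∧ b.1 + b.2 ≤ 1/2}
def C2β : Set (ℝ×ℝ) := {b | 1/2 ≤ b.1 ∧ 0 ≤ b.2 ∧ b.1 + b.2 ≤ 1}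
def C3β : Set (ℝ×ℝ) := {b | 0 ≤ b.1 ∧ 1/2 ≤ b.2 ∧ b.1 + b.2 ≤ 1}

lemma meas_C1β : MeasurableSet C1β := by
  refine (measurableSet_le measurable_const measurable_fst).inter
    ((measurableSet_le measurable_const measurable_snd).inter
    (measurableSet_le (measurable_fst.add measurable_snd) measurable_const))
lemma meas_C2β : MeasurableSet C2β := by
  refine (measurableSet_le measurable_const measurable_fst).inter
    ((measurableSet_le measurable_const measurable_snd).inter
    (measurableSet_le (measurable_fst.add measurable_snd) measurable_const))
lemma meas_C3β : MeasurableSet C3β := by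
  refine (measurableSet_le measurable_const measurable_fst).inter
    ((measurableSet_le measurable_const measurable_snd).inter
    (measurableSet_le (measurable_fst.add measurable_snd) measurable_const))

lemma mem_T (x : ℝ×ℝ) : x ∈ T ↔ 0 ≤ (Φ x).1 ∧ 0 ≤ (Φ x).2 ∧ (Φ x).1 + (Φ x).2 ≤ 1 := by
  constructor
  · intro hx
    have h0 := hx 0
    have h1 := hx 1
    have h2 := hx 2
    rw [bary_zero] at h0
    rw [bary_one] at h1
    rw [bary_two] at h2
    exact ⟨h1, h2, by linarith⟩
  · rintro ⟨h1, h2, h0⟩ i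
    fin_cases i
    · show 0 ≤ bary y1 y2 y3 x 0; rw [bary_zero]; linarith
    · show 0 ≤ bary y1 y2 y3 x 1; rw [bary_one]; linarith
    · show 0 ≤ bary y1 y2 y3 x 2; rw [bary_two]; linarith

lemma e0_eq : Real.sqrt 3 / 3 - Real.sqrt 3 / 12 = Real.sqrt 3 / 4 := by ring

lemma mem_corner1 (x : ℝ×ℝ) : x ∈ corner1 (Real.sqrt 3 / 4) ↔ Φ x ∈ C1β := by
  have hkey : (Φ x).1 + (Φ x).2 = (Real.sqrt 3 * x.1 + x.2)/Real.sqrt 3 := by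
    rw [Φ_apply]; field_simp; try ring
  constructor
  · rintro ⟨hT, hc⟩
    have h := (mem_T x).1 hT
    refine ⟨h.1, h.2.1, ?_⟩
    rw [hkey, div_le_iff₀ s3pos]
    nlinarith [s3mul, s3pos]
  · rintro ⟨h1, h2, h3⟩
    refine ⟨(mem_T x).2 ⟨h1, h2, by linarith⟩, ?_⟩
    rw [hkey, div_le_iff₀ s3pos] at h3
    nlinarith [s3mul, s3pos]

lemma mem_corner2 (x : ℝ×ℝ) : x ∈ corner2 (Real.sqrt 3 / 4) ↔ Φ x ∈ C2β := by
  have hkey : 1 - (Φ x).1 = (Real.sqrt 3 * (1 - x.1) + x.2)/Real.sqrt 3 := by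
    rw [Φ_apply]; field_simp; try ring
  constructor
  · rintro ⟨hT, hc⟩
    have h := (mem_T x).1 hT
    refine ⟨?_, h.2.1, by linarith [h.1, h.2.1, h.2.2]⟩
    have : (Real.sqrt 3 * (1 - x.1) + x.2)/Real.sqrt 3 ≤ 1/2 := by
      rw [div_le_iff₀ s3pos]; nlinarith [s3mul, s3pos]
    linarith [hkey ▸ this]
  · rintro ⟨h1, h2, h3⟩
    refine ⟨(mem_T x).2 ⟨by linarith, h2, h3⟩, ?_⟩
    have h4 : 1 - (Φ x).1 ≤ 1/2 := by linarith
    rw [hkey, div_le_iff₀ s3pos] at h4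
    nlinarith [s3mul, s3pos]

lemma mem_corner3 (x : ℝ×ℝ) : x ∈ corner3 (Real.sqrt 3 / 4) ↔ Φ x ∈ C3β := by
  have hkey : 1 - (Φ x).2 = 2*(Real.sqrt 3 / 2 - x.2)/Real.sqrt 3 := by
    rw [Φ_apply]; field_simp; try ring
  constructor
  · rintro ⟨hT, hc⟩
    have h := (mem_T x).1 hT
    refine ⟨h.1, ?_, by linarith [h.1, h.2.1, h.2.2]⟩
    have : 2*(Real.sqrt 3 / 2 - x.2)/Real.sqrt 3 ≤ 1/2 := by
      rw [div_le_iff₀ s3pos]; nlinarith [s3mul, s3pos]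
    have h5 := hkey ▸ this
    linarith
  · rintro ⟨h1, h2, h3⟩
    refine ⟨(mem_T x).2 ⟨h1, by linarith, h3⟩, ?_⟩
    have h4 : 1 - (Φ x).2 ≤ 1/2 := by linarith
    rw [hkey, div_le_iff₀ s3pos] at h4
    nlinarith [s3mul, s3pos]

lemma Tass_eq : Tass (Real.sqrt 3 / 12) = Φ ⁻¹' (C1β ∪ C2β ∪ C3β) := by
  unfold Tass
  rw [e0_eq]
  ext x
  simp only [mem_union, mem_preimage, mem_corner1, mem_corner2, mem_corner3]

-- jmax lemmas
lemma jmax0 (x : ℝ×ℝ) (hx : Φ x ∈ C1β) : jmax y1 y2 y3 x = 0 := by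
  obtain ⟨h1, h2, h3⟩ := hx
  rw [jmax, if_pos]
  rw [bary_one, bary_two, bary_zero]
  constructor <;> linarith

lemma jmax1 (x : ℝ×ℝ) (hx : Φ x ∈ C2β) (hx1 : Φ x ∉ C1β) : jmax y1 y2 y3 x = 1 := by
  obtain ⟨h1, h2, h3⟩ := hx
  rw [jmax, if_neg, if_pos]
  · rw [bary_one, bary_two]; linarith
  · rw [bary_one, bary_two, bary_zero]
    rintro ⟨g1, g2⟩
    exact hx1 ⟨by linarith, h2, by linarith⟩

lemma jmax2 (x : ℝ×ℝ) (hx : Φ x ∈ C3β) (hx1 : Φ x ∉ C1β) (hx2 : Φ x ∉ C2β) :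
    jmax y1 y2 y3 x = 2 := by
  obtain ⟨h1, h2, h3⟩ := hx
  rw [jmax, if_neg, if_neg]
  · rw [bary_one, bary_two]
    intro g
    exact hx2 ⟨by linarith, by linarith, h3⟩
  · rw [bary_one, bary_two, bary_zero]
    rintro ⟨g1, g2⟩
    exact hx1 ⟨h1, by linarith, by linarith⟩
end AP

namespace AP
lemma vol_pt (p : ℝ×ℝ) : volume ({p} : Set (ℝ×ℝ)) = 0 := by
  have h : ({p} : Set (ℝ×ℝ)) = {p.1} ×ˢ {p.2} := by rw [Set.singleton_prod_singleton]
  rw [h, Measure.volume_eq_prod ℝ ℝ, Measure.prod_prod, Real.volume_singleton, zero_mul]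

lemma C12 : C1β ∩ C2β ⊆ {((1:ℝ)/2, (0:ℝ))} := by
  rintro ⟨u,v⟩ ⟨⟨a1,a2,a3⟩,⟨b1,b2,b3⟩⟩
  simp only [mem_singleton_iff, Prod.mk.injEq]
  constructor <;> linarith

lemma C13 : C1β ∩ C3β ⊆ {((0:ℝ), (1:ℝ)/2)} := by
  rintro ⟨u,v⟩ ⟨⟨a1,a2,a3⟩,⟨b1,b2,b3⟩⟩
  simp only [mem_singleton_iff, Prod.mk.injEq]
  constructor <;> linarith

lemma C23 : C2β ∩ C3β ⊆ {((1:ℝ)/2, (1:ℝ)/2)} := by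
  rintro ⟨u,v⟩ ⟨⟨a1,a2,a3⟩,⟨b1,b2,b3⟩⟩
  simp only [mem_singleton_iff, Prod.mk.injEq]
  constructor <;> linarith

lemma vol_triple {W : Set (ℝ×ℝ)} (hW : MeasurableSet W) :
    volume (W ∩ (C1β ∪ C2β ∪ C3β))
      = volume (W ∩ C1β) + volume (W ∩ C2β) + volume (W ∩ C3β) := by
  rw [inter_union_distrib_left, inter_union_distrib_left]
  have hd : AEDisjoint volume ((W∩C1β) ∪ (W∩C2β)) (W∩C3β) := by
    apply measure_mono_null (t := ({((0:ℝ),(1:ℝ)/2)} ∪ {((1:ℝ)/2,(1:ℝ)/2)} : Set (ℝ×ℝ)))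
    · rintro x ⟨(h|h), hc⟩
      · exact Or.inl (C13 ⟨h.2, hc.2⟩)
      · exact Or.inr (C23 ⟨h.2, hc.2⟩)
    · exact measure_union_null (vol_pt _) (vol_pt _)
  rw [measure_union₀ (hW.inter meas_C3β).nullMeasurableSet hd]
  congr 1
  exact measure_union₀ (hW.inter meas_C2β).nullMeasurableSet
    (measure_mono_null (fun x hx => C12 ⟨hx.1.2, hx.2.2⟩) (vol_pt _))

def hfun (s : ℝ) : ℝ≥0∞ :=
  ENNReal.ofReal ((min s (1/2))^2/2) + ENNReal.ofReal ((max (min s 1 - 1/2) 0)^2/2)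
    + ENNReal.ofReal ((max (min s 1 - 1/2) 0)^2/2)

lemma hfun_meas : Measurable hfun := by
  unfold hfun
  apply Measurable.fun_add
  apply Measurable.fun_add
  · exact ENNReal.measurable_ofReal.comp
      (((measurable_id.min measurable_const).pow_const 2).div_const 2)
  · exact ENNReal.measurable_ofReal.comp
      ((((measurable_id.min measurable_const).sub measurable_const).max
        measurable_const).pow_const 2 |>.div_const 2)
  · exact ENNReal.measurable_ofReal.comp
      ((((measurable_id.min measurable_const).sub measurable_const).max
        measurable_const).pow_const 2 |>.div_const 2)


lemma volβ0 (s : ℝ) (hs : 0 ≤ s) :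
    volume ({b : ℝ×ℝ | b.1 + b.2 ≤ s} ∩ (C1β ∪ C2β ∪ C3β)) = hfun s := by
  have hW : MeasurableSet {b : ℝ×ℝ | b.1 + b.2 ≤ s} :=
    measurableSet_le (measurable_fst.add measurable_snd) measurable_const
  rw [vol_triple hW]
  have h1 : {b : ℝ×ℝ | b.1 + b.2 ≤ s} ∩ C1β
      = {p : ℝ×ℝ | 0 ≤ p.1 ∧ 0 ≤ p.2 ∧ p.1 + p.2 ≤ min s (1/2)} := by
    ext b
    simp only [C1β, mem_inter_iff, mem_setOf_eq, le_min_iff]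
    tauto
  have h2 : {b : ℝ×ℝ | b.1 + b.2 ≤ s} ∩ C2β
      = {p : ℝ×ℝ | 1/2 ≤ p.1 ∧ 0 ≤ p.2 ∧ p.1 + p.2 ≤ min s 1} := by
    ext b
    simp only [C2β, mem_inter_iff, mem_setOf_eq, le_min_iff]
    tauto
  have h3 : {b : ℝ×ℝ | b.1 + b.2 ≤ s} ∩ C3β
      = {p : ℝ×ℝ | 0 ≤ p.1 ∧ 1/2 ≤ p.2 ∧ p.1 + p.2 ≤ min s 1} := by
    ext b
    simp only [C3β, mem_inter_iff, mem_setOf_eq, le_min_iff]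
    tauto
  rw [h1, h2, h3, area_tri' 0 0 _ (by simp only [add_zero]; exact le_min hs (by norm_num))]
  by_cases hc : 1/2 ≤ s
  · have hm1 : (1:ℝ)/2 ≤ min s 1 := le_min hc (by norm_num)
    rw [area_tri' (1/2) 0 _ (by linarith), area_tri' 0 (1/2) _ (by linarith)]
    have hmax : max (min s 1 - 1/2) 0 = min s 1 - 1/2 := max_eq_left (by linarith)
    unfold hfun
    rw [hmax]
    simp only [sub_zero]
  · have hmin : min s 1 = s := min_eq_left (by linarith)
    have he2 : {p : ℝ×ℝ | 1/2 ≤ p.1 ∧ 0 ≤ p.2 ∧ p.1 + p.2 ≤ min s 1} = (∅ : Set (ℝ×ℝ)) := by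
      rw [eq_empty_iff_forall_notMem]
      rintro p ⟨a,b,c⟩
      rw [hmin] at c
      linarith
    have he3 : {p : ℝ×ℝ | 0 ≤ p.1 ∧ 1/2 ≤ p.2 ∧ p.1 + p.2 ≤ min s 1} = (∅ : Set (ℝ×ℝ)) := by
      rw [eq_empty_iff_forall_notMem]
      rintro p ⟨a,b,c⟩
      rw [hmin] at c
      linarith
    rw [he2, he3, measure_empty, add_zero, add_zero]
    unfold hfun
    rw [max_eq_right (by rw [hmin]; linarith)]
    norm_num

lemma volβ1 (s : ℝ) (hs : 0 ≤ s) :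
    volume ({b : ℝ×ℝ | 1 - b.1 ≤ s} ∩ (C1β ∪ C2β ∪ C3β)) = hfun s := by
  have hW : MeasurableSet {b : ℝ×ℝ | 1 - b.1 ≤ s} :=
    measurableSet_le (measurable_const.sub measurable_fst) measurable_const
  rw [vol_triple hW]
  have h1 : {b : ℝ×ℝ | 1 - b.1 ≤ s} ∩ C1β
      = {p : ℝ×ℝ | max (1-s) 0 ≤ p.1 ∧ 0 ≤ p.2 ∧ p.1 + p.2 ≤ 1/2} := by
    ext b
    simp only [C1β, mem_inter_iff, mem_setOf_eq, max_le_iff]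
    constructor
    · rintro ⟨hw, g1, g2, g3⟩; exact ⟨⟨by linarith, g1⟩, g2, g3⟩
    · rintro ⟨⟨g1, g2⟩, h2, h3⟩; exact ⟨by linarith, g2, h2, h3⟩
  have h2 : {b : ℝ×ℝ | 1 - b.1 ≤ s} ∩ C2β
      = {p : ℝ×ℝ | max (1-s) (1/2) ≤ p.1 ∧ 0 ≤ p.2 ∧ p.1 + p.2 ≤ 1} := by
    ext b
    simp only [C2β, mem_inter_iff, mem_setOf_eq, max_le_iff]
    constructor
    · rintro ⟨hw, g1, g2, g3⟩; exact ⟨⟨by linarith, g1⟩, g2, g3⟩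
    · rintro ⟨⟨g1, g2⟩, h2, h3⟩; exact ⟨by linarith, g2, h2, h3⟩
  have h3 : {b : ℝ×ℝ | 1 - b.1 ≤ s} ∩ C3β
      = {p : ℝ×ℝ | max (1-s) 0 ≤ p.1 ∧ 1/2 ≤ p.2 ∧ p.1 + p.2 ≤ 1} := by
    ext b
    simp only [C3β, mem_inter_iff, mem_setOf_eq, max_le_iff]
    constructor
    · rintro ⟨hw, g1, g2, g3⟩; exact ⟨⟨by linarith, g1⟩, g2, g3⟩
    · rintro ⟨⟨g1, g2⟩, h2, h3⟩; exact ⟨by linarith, g2, h2, h3⟩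
  rw [h1, h2, h3,
    area_tri' (max (1-s) (1/2)) 0 1 (by simp only [add_zero, max_le_iff]; constructor <;> linarith)]
  have v2 : (1:ℝ) - max (1-s) (1/2) - 0 = min s (1/2) := by
    rcases le_total s (1/2) with h|h
    · rw [max_eq_left (by linarith), min_eq_left h]; ring
    · rw [max_eq_right (by linarith), min_eq_right h]; norm_num
  by_cases hc : 1/2 ≤ s
  · have hle : max (1-s) 0 ≤ 1/2 := max_le (by linarith) (by norm_num)
    rw [area_tri' (max (1-s) 0) 0 (1/2) (by linarith),
      area_tri' (max (1-s) 0) (1/2) 1 (by linarith)]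
    have v1 : (1:ℝ)/2 - max (1-s) 0 - 0 = max (min s 1 - 1/2) 0 := by
      rcases le_total s 1 with h|h
      · rw [max_eq_left (by linarith), min_eq_left h, max_eq_left (by linarith)]; ring
      · rw [max_eq_right (by linarith), min_eq_right h, max_eq_left (by norm_num)]; norm_num
    have v3 : (1:ℝ) - max (1-s) 0 - 1/2 = max (min s 1 - 1/2) 0 := by rw [← v1]; ring
    rw [v1, v2, v3]
    unfold hfun
    ring
  · push_neg at hc
    have he1 : {p : ℝ×ℝ | max (1-s) 0 ≤ p.1 ∧ 0 ≤ p.2 ∧ p.1 + p.2 ≤ 1/2} = (∅ : Set (ℝ×ℝ)) := by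
      rw [eq_empty_iff_forall_notMem]
      rintro p ⟨a,b,c⟩
      have := le_trans (le_max_left (1-s) 0) a
      linarith
    have he3 : {p : ℝ×ℝ | max (1-s) 0 ≤ p.1 ∧ 1/2 ≤ p.2 ∧ p.1 + p.2 ≤ 1} = (∅ : Set (ℝ×ℝ)) := by
      rw [eq_empty_iff_forall_notMem]
      rintro p ⟨a,b,c⟩
      have := le_trans (le_max_left (1-s) 0) a
      linarith
    rw [he1, he3, measure_empty, zero_add, add_zero, v2]
    unfold hfun
    rw [min_eq_left (by linarith : s ≤ 1), max_eq_right (by linarith)]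
    norm_num

lemma volβ2 (s : ℝ) (hs : 0 ≤ s) :
    volume ({b : ℝ×ℝ | 1 - b.2 ≤ s} ∩ (C1β ∪ C2β ∪ C3β)) = hfun s := by
  have hW : MeasurableSet {b : ℝ×ℝ | 1 - b.2 ≤ s} :=
    measurableSet_le (measurable_const.sub measurable_snd) measurable_const
  rw [vol_triple hW]
  have h1 : {b : ℝ×ℝ | 1 - b.2 ≤ s} ∩ C1β
      = {p : ℝ×ℝ | 0 ≤ p.1 ∧ max (1-s) 0 ≤ p.2 ∧ p.1 + p.2 ≤ 1/2} := by
    ext b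
    simp only [C1β, mem_inter_iff, mem_setOf_eq, max_le_iff]
    constructor
    · rintro ⟨hw, g1, g2, g3⟩; exact ⟨g1, ⟨by linarith, g2⟩, g3⟩
    · rintro ⟨g1, ⟨g2, g3⟩, h3⟩; exact ⟨by linarith, g1, g3, h3⟩
  have h2 : {b : ℝ×ℝ | 1 - b.2 ≤ s} ∩ C2β
      = {p : ℝ×ℝ | 1/2 ≤ p.1 ∧ max (1-s) 0 ≤ p.2 ∧ p.1 + p.2 ≤ 1} := by
    ext b
    simp only [C2β, mem_inter_iff, mem_setOf_eq, max_le_iff]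
    constructor
    · rintro ⟨hw, g1, g2, g3⟩; exact ⟨g1, ⟨by linarith, g2⟩, g3⟩
    · rintro ⟨g1, ⟨g2, g3⟩, h3⟩; exact ⟨by linarith, g1, g3, h3⟩
  have h3 : {b : ℝ×ℝ | 1 - b.2 ≤ s} ∩ C3β
      = {p : ℝ×ℝ | 0 ≤ p.1 ∧ max (1-s) (1/2) ≤ p.2 ∧ p.1 + p.2 ≤ 1} := by
    ext b
    simp only [C3β, mem_inter_iff, mem_setOf_eq, max_le_iff]
    constructor
    · rintro ⟨hw, g1, g2, g3⟩; exact ⟨g1, ⟨by linarith, g2⟩, g3⟩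
    · rintro ⟨g1, ⟨g2, g3⟩, h3⟩; exact ⟨by linarith, g1, g3, h3⟩
  rw [h1, h2, h3,
    area_tri' 0 (max (1-s) (1/2)) 1 (by simp only [zero_add, max_le_iff]; constructor <;> linarith)]
  have v2 : (1:ℝ) - 0 - max (1-s) (1/2) = min s (1/2) := by
    rcases le_total s (1/2) with h|h
    · rw [max_eq_left (by linarith), min_eq_left h]; ring
    · rw [max_eq_right (by linarith), min_eq_right h]; norm_num
  by_cases hc : 1/2 ≤ s
  · have hle : max (1-s) 0 ≤ 1/2 := max_le (by linarith) (by norm_num)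
    rw [area_tri' 0 (max (1-s) 0) (1/2) (by linarith),
      area_tri' (1/2) (max (1-s) 0) 1 (by linarith)]
    have v1 : (1:ℝ)/2 - 0 - max (1-s) 0 = max (min s 1 - 1/2) 0 := by
      rcases le_total s 1 with h|h
      · rw [max_eq_left (by linarith), min_eq_left h, max_eq_left (by linarith)]; ring
      · rw [max_eq_right (by linarith), min_eq_right h, max_eq_left (by norm_num)]; norm_num
    have v3 : (1:ℝ) - 1/2 - max (1-s) 0 = max (min s 1 - 1/2) 0 := by rw [← v1]; ring
    rw [v1, v2, v3]
    unfold hfun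
    ring
  · push_neg at hc
    have he1 : {p : ℝ×ℝ | 0 ≤ p.1 ∧ max (1-s) 0 ≤ p.2 ∧ p.1 + p.2 ≤ 1/2} = (∅ : Set (ℝ×ℝ)) := by
      rw [eq_empty_iff_forall_notMem]
      rintro p ⟨a,b,c⟩
      have := le_trans (le_max_left (1-s) 0) b
      linarith
    have he2 : {p : ℝ×ℝ | 1/2 ≤ p.1 ∧ max (1-s) 0 ≤ p.2 ∧ p.1 + p.2 ≤ 1} = (∅ : Set (ℝ×ℝ)) := by
      rw [eq_empty_iff_forall_notMem]
      rintro p ⟨a,b,c⟩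
      have := le_trans (le_max_left (1-s) 0) b
      linarith
    rw [he1, he2, measure_empty, zero_add, zero_add, v2]
    unfold hfun
    rw [min_eq_left (by linarith : s ≤ 1), max_eq_right (by linarith)]
    norm_num
end AP

namespace AP
lemma Φdet_ne : (1:ℝ)*(2*(Real.sqrt 3)⁻¹) - (-(Real.sqrt 3)⁻¹)*0 ≠ 0 := by
  have := s3pos
  intro h
  rw [show (1:ℝ)*(2*(Real.sqrt 3)⁻¹) - (-(Real.sqrt 3)⁻¹)*0 = 2*(Real.sqrt 3)⁻¹ by ring] at h
  have h2 : (Real.sqrt 3)⁻¹ > 0 := by positivity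
  linarith

lemma Φdet_absinv :
    |((1:ℝ)*(2*(Real.sqrt 3)⁻¹) - (-(Real.sqrt 3)⁻¹)*0)⁻¹| = Real.sqrt 3 / 2 := by
  rw [show (1:ℝ)*(2*(Real.sqrt 3)⁻¹) - (-(Real.sqrt 3)⁻¹)*0 = 2*(Real.sqrt 3)⁻¹ by ring,
    mul_inv, inv_inv, abs_of_nonneg (by positivity)]
  ring

lemma vol_preimage_Φ (S : Set (ℝ×ℝ)) :
    volume (Φ ⁻¹' S) = ENNReal.ofReal (Real.sqrt 3 / 2) * volume S := by
  rw [show Φ = lmap 1 (-(Real.sqrt 3)⁻¹) 0 (2*(Real.sqrt 3)⁻¹) from rfl,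
    vol_preimage_lmap _ _ _ _ Φdet_ne S, Φdet_absinv]

lemma meas_Φ : Measurable (Φ : ℝ×ℝ → ℝ×ℝ) := (lmap_cont _ _ _ _).measurable

lemma corner_sub_T {z : ℝ×ℝ} (hz : Φ z ∈ C1β ∪ C2β ∪ C3β) : z ∈ T := by
  rw [mem_T]
  rcases hz with (⟨a,b,c⟩|⟨a,b,c⟩)|⟨a,b,c⟩
  exacts [⟨a, b, by linarith⟩, ⟨by linarith, b, c⟩, ⟨a, by linarith, c⟩]

lemma N_inter0 (r : ℝ) (x : ℝ×ℝ) (hj : jmax y1 y2 y3 x = 0) :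
    N r x ∩ Tass (Real.sqrt 3 / 12)
      = Φ ⁻¹' ({b : ℝ×ℝ | b.1 + b.2 ≤ r * ((Φ x).1 + (Φ x).2)} ∩ (C1β ∪ C2β ∪ C3β)) := by
  rw [Tass_eq]
  ext z
  simp only [N, prox, hj, mem_inter_iff, mem_preimage, mem_setOf_eq]
  rw [bary_zero z, bary_zero x,
    show (1:ℝ) - (1 - (Φ z).1 - (Φ z).2) = (Φ z).1 + (Φ z).2 from by ring,
    show (1:ℝ) - (1 - (Φ x).1 - (Φ x).2) = (Φ x).1 + (Φ x).2 from by ring]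
  constructor
  · rintro ⟨⟨hzT, hineq⟩, hc⟩
    exact ⟨hineq, hc⟩
  · rintro ⟨hw, hc⟩
    exact ⟨⟨corner_sub_T hc, hw⟩, hc⟩

lemma N_inter1 (r : ℝ) (x : ℝ×ℝ) (hj : jmax y1 y2 y3 x = 1) :
    N r x ∩ Tass (Real.sqrt 3 / 12)
      = Φ ⁻¹' ({b : ℝ×ℝ | 1 - b.1 ≤ r * (1 - (Φ x).1)} ∩ (C1β ∪ C2β ∪ C3β)) := by
  rw [Tass_eq]
  ext z
  simp only [N, prox, hj, mem_inter_iff, mem_preimage, mem_setOf_eq]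
  rw [bary_one z, bary_one x]
  constructor
  · rintro ⟨⟨hzT, hineq⟩, hc⟩
    exact ⟨hineq, hc⟩
  · rintro ⟨hw, hc⟩
    exact ⟨⟨corner_sub_T hc, hw⟩, hc⟩

lemma N_inter2 (r : ℝ) (x : ℝ×ℝ) (hj : jmax y1 y2 y3 x = 2) :
    N r x ∩ Tass (Real.sqrt 3 / 12)
      = Φ ⁻¹' ({b : ℝ×ℝ | 1 - b.2 ≤ r * (1 - (Φ x).2)} ∩ (C1β ∪ C2β ∪ C3β)) := by
  rw [Tass_eq]
  ext z
  simp only [N, prox, hj, mem_inter_iff, mem_preimage, mem_setOf_eq]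
  rw [bary_two z, bary_two x]
  constructor
  · rintro ⟨⟨hzT, hineq⟩, hc⟩
    exact ⟨hineq, hc⟩
  · rintro ⟨hw, hc⟩
    exact ⟨⟨corner_sub_T hc, hw⟩, hc⟩

lemma vol_inner0 (r : ℝ) (x : ℝ×ℝ) (hj : jmax y1 y2 y3 x = 0)
    (hs : 0 ≤ r * ((Φ x).1 + (Φ x).2)) :
    volume (N r x ∩ Tass (Real.sqrt 3 / 12))
      = ENNReal.ofReal (Real.sqrt 3 / 2) * hfun (r * ((Φ x).1 + (Φ x).2)) := by
  rw [N_inter0 r x hj, vol_preimage_Φ, volβ0 _ hs]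

lemma vol_inner1 (r : ℝ) (x : ℝ×ℝ) (hj : jmax y1 y2 y3 x = 1)
    (hs : 0 ≤ r * (1 - (Φ x).1)) :
    volume (N r x ∩ Tass (Real.sqrt 3 / 12))
      = ENNReal.ofReal (Real.sqrt 3 / 2) * hfun (r * (1 - (Φ x).1)) := by
  rw [N_inter1 r x hj, vol_preimage_Φ, volβ1 _ hs]

lemma vol_inner2 (r : ℝ) (x : ℝ×ℝ) (hj : jmax y1 y2 y3 x = 2)
    (hs : 0 ≤ r * (1 - (Φ x).2)) :
    volume (N r x ∩ Tass (Real.sqrt 3 / 12))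
      = ENNReal.ofReal (Real.sqrt 3 / 2) * hfun (r * (1 - (Φ x).2)) := by
  rw [N_inter2 r x hj, vol_preimage_Φ, volβ2 _ hs]

lemma vol_Tass : volume (Tass (Real.sqrt 3 / 12)) = ENNReal.ofReal (3*Real.sqrt 3/16) := by
  rw [Tass_eq, vol_preimage_Φ]
  have hu : (C1β ∪ C2β ∪ C3β : Set (ℝ×ℝ)) = univ ∩ (C1β ∪ C2β ∪ C3β) := (univ_inter _).symm
  rw [hu, vol_triple MeasurableSet.univ, univ_inter, univ_inter, univ_inter]
  have a1 : volume C1β = ENNReal.ofReal ((1/2 - 0 - 0)^2/2) := area_tri' 0 0 (1/2) (by norm_num)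
  have a2 : volume C2β = ENNReal.ofReal ((1 - 1/2 - 0)^2/2) := area_tri' (1/2) 0 1 (by norm_num)
  have a3 : volume C3β = ENNReal.ofReal ((1 - 0 - 1/2)^2/2) := area_tri' 0 (1/2) 1 (by norm_num)
  rw [a1, a2, a3, ← ENNReal.ofReal_add (by norm_num) (by norm_num),
    ← ENNReal.ofReal_add (by norm_num) (by norm_num),
    ← ENNReal.ofReal_mul (by positivity)]
  congr 1
  ring

-- measurability of bary / T / N / arc set
lemma meas_bary0 : Measurable fun x : ℝ×ℝ => bary y1 y2 y3 x 0 := by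
  simp only [bary_zero, Φ_apply]
  fun_prop

lemma meas_bary1 : Measurable fun x : ℝ×ℝ => bary y1 y2 y3 x 1 := by
  simp only [bary_one, Φ_apply]
  fun_prop

lemma meas_bary2 : Measurable fun x : ℝ×ℝ => bary y1 y2 y3 x 2 := by
  simp only [bary_two, Φ_apply]
  fun_prop

lemma meas_bary (i : Fin 3) : Measurable fun x : ℝ×ℝ => bary y1 y2 y3 x i := by
  have hall : ∀ j : Fin 3, j = 0 ∨ j = 1 ∨ j = 2 := by decide
  have h := hall i
  rcases h with h|h|h <;> subst h
  exacts [meas_bary0, meas_bary1, meas_bary2]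

lemma meas_T : MeasurableSet T := by
  have h : T = Φ ⁻¹' {b : ℝ×ℝ | 0 ≤ b.1 ∧ 0 ≤ b.2 ∧ b.1 + b.2 ≤ 1} := by
    ext x
    exact mem_T x
  rw [h]
  exact meas_Φ (by
    refine (measurableSet_le measurable_const measurable_fst).inter
      ((measurableSet_le measurable_const measurable_snd).inter
      (measurableSet_le (measurable_fst.add measurable_snd) measurable_const)))

lemma meas_N (r : ℝ) (x : ℝ×ℝ) : MeasurableSet (N r x) := by
  have h : N r x = T ∩ {z : ℝ×ℝ |
      1 - bary y1 y2 y3 z (jmax y1 y2 y3 x) ≤ r * (1 - bary y1 y2 y3 x (jmax y1 y2 y3 x))} := rfl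
  rw [h]
  exact meas_T.inter
    (measurableSet_le (measurable_const.sub (meas_bary _)) measurable_const)
end AP

namespace AP
lemma hall3 : ∀ j : Fin 3, j = 0 ∨ j = 1 ∨ j = 2 := by decide

lemma jmax_eq0_iff (x : ℝ×ℝ) : jmax y1 y2 y3 x = 0
    ↔ (bary y1 y2 y3 x 1 ≤ bary y1 y2 y3 x 0 ∧ bary y1 y2 y3 x 2 ≤ bary y1 y2 y3 x 0) := by
  unfold jmax
  split_ifs with h1 h2 <;> simp [h1, Fin.reduceEq]

lemma jmax_eq1_iff (x : ℝ×ℝ) : jmax y1 y2 y3 x = 1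
    ↔ (¬(bary y1 y2 y3 x 1 ≤ bary y1 y2 y3 x 0 ∧ bary y1 y2 y3 x 2 ≤ bary y1 y2 y3 x 0)
        ∧ bary y1 y2 y3 x 2 ≤ bary y1 y2 y3 x 1) := by
  unfold jmax
  split_ifs with h1 h2 <;> simp_all [Fin.reduceEq]

lemma jmax_eq2_iff (x : ℝ×ℝ) : jmax y1 y2 y3 x = 2
    ↔ (¬(bary y1 y2 y3 x 1 ≤ bary y1 y2 y3 x 0 ∧ bary y1 y2 y3 x 2 ≤ bary y1 y2 y3 x 0)
        ∧ ¬(bary y1 y2 y3 x 2 ≤ bary y1 y2 y3 x 1)) := by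
  unfold jmax
  split_ifs with h1 h2 <;> simp_all [Fin.reduceEq]

lemma meas_jmax0 : MeasurableSet {x : ℝ×ℝ | jmax y1 y2 y3 x = 0} := by
  have h : {x : ℝ×ℝ | jmax y1 y2 y3 x = 0}
      = {x : ℝ×ℝ | bary y1 y2 y3 x 1 ≤ bary y1 y2 y3 x 0}
        ∩ {x : ℝ×ℝ | bary y1 y2 y3 x 2 ≤ bary y1 y2 y3 x 0} := by
    ext x; exact (jmax_eq0_iff x).trans Iff.rfl
  rw [h]
  exact (measurableSet_le meas_bary1 meas_bary0).inter (measurableSet_le meas_bary2 meas_bary0)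

lemma meas_jmax1 : MeasurableSet {x : ℝ×ℝ | jmax y1 y2 y3 x = 1} := by
  have h : {x : ℝ×ℝ | jmax y1 y2 y3 x = 1}
      = ({x : ℝ×ℝ | bary y1 y2 y3 x 1 ≤ bary y1 y2 y3 x 0}
          ∩ {x : ℝ×ℝ | bary y1 y2 y3 x 2 ≤ bary y1 y2 y3 x 0})ᶜ
        ∩ {x : ℝ×ℝ | bary y1 y2 y3 x 2 ≤ bary y1 y2 y3 x 1} := by
    ext x
    rw [mem_setOf_eq, jmax_eq1_iff]
    simp [mem_inter_iff, mem_compl_iff]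
  rw [h]
  exact (((measurableSet_le meas_bary1 meas_bary0).inter
    (measurableSet_le meas_bary2 meas_bary0)).compl).inter
    (measurableSet_le meas_bary2 meas_bary1)

lemma meas_jmax2 : MeasurableSet {x : ℝ×ℝ | jmax y1 y2 y3 x = 2} := by
  have h : {x : ℝ×ℝ | jmax y1 y2 y3 x = 2}
      = ({x : ℝ×ℝ | bary y1 y2 y3 x 1 ≤ bary y1 y2 y3 x 0}
          ∩ {x : ℝ×ℝ | bary y1 y2 y3 x 2 ≤ bary y1 y2 y3 x 0})ᶜ
        ∩ ({x : ℝ×ℝ | bary y1 y2 y3 x 2 ≤ bary y1 y2 y3 x 1})ᶜ := by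
    ext x
    rw [mem_setOf_eq, jmax_eq2_iff]
    simp [mem_inter_iff, mem_compl_iff]
  rw [h]
  exact (((measurableSet_le meas_bary1 meas_bary0).inter
    (measurableSet_le meas_bary2 meas_bary0)).compl).inter
    (measurableSet_le meas_bary2 meas_bary1).compl

lemma meas_Sset (r : ℝ) : MeasurableSet {p : (ℝ×ℝ)×(ℝ×ℝ) | p.2 ∈ N r p.1} := by
  have hdecomp : {p : (ℝ×ℝ)×(ℝ×ℝ) | p.2 ∈ N r p.1}
      = (({p : (ℝ×ℝ)×(ℝ×ℝ) | jmax y1 y2 y3 p.1 = 0}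
          ∩ {p : (ℝ×ℝ)×(ℝ×ℝ) | p.2 ∈ T ∧
              1 - bary y1 y2 y3 p.2 0 ≤ r * (1 - bary y1 y2 y3 p.1 0)})
        ∪ ({p : (ℝ×ℝ)×(ℝ×ℝ) | jmax y1 y2 y3 p.1 = 1}
          ∩ {p : (ℝ×ℝ)×(ℝ×ℝ) | p.2 ∈ T ∧
              1 - bary y1 y2 y3 p.2 1 ≤ r * (1 - bary y1 y2 y3 p.1 1)}))
        ∪ ({p : (ℝ×ℝ)×(ℝ×ℝ) | jmax y1 y2 y3 p.1 = 2}
          ∩ {p : (ℝ×ℝ)×(ℝ×ℝ) | p.2 ∈ T ∧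
              1 - bary y1 y2 y3 p.2 2 ≤ r * (1 - bary y1 y2 y3 p.1 2)}) := by
    ext p
    simp only [mem_union, mem_inter_iff, mem_setOf_eq]
    rcases hall3 (jmax y1 y2 y3 p.1) with h|h|h <;>
      simp [N, prox, T, h, Fin.reduceEq]
  rw [hdecomp]
  have hT2 : MeasurableSet {p : (ℝ×ℝ)×(ℝ×ℝ) | p.2 ∈ T} := measurable_snd meas_T
  have mk : ∀ i : Fin 3, MeasurableSet {p : (ℝ×ℝ)×(ℝ×ℝ) |
      1 - bary y1 y2 y3 p.2 i ≤ r * (1 - bary y1 y2 y3 p.1 i)} := fun i =>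
    measurableSet_le (measurable_const.sub ((meas_bary i).comp measurable_snd))
      (((measurable_const.sub ((meas_bary i).comp measurable_fst)).const_mul r))
  have hinter : ∀ i : Fin 3, MeasurableSet {p : (ℝ×ℝ)×(ℝ×ℝ) | p.2 ∈ T ∧
      1 - bary y1 y2 y3 p.2 i ≤ r * (1 - bary y1 y2 y3 p.1 i)} := fun i =>
    hT2.inter (mk i)
  exact (((meas_jmax0.preimage measurable_fst).inter (hinter 0)).union
    ((meas_jmax1.preimage measurable_fst).inter (hinter 1))).union
    ((meas_jmax2.preimage measurable_fst).inter (hinter 2))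

lemma outer0 (F : ℝ → ℝ≥0∞) (hF : Measurable F) :
    ∫⁻ x in Φ ⁻¹' C1β, F ((Φ x).1 + (Φ x).2) ∂volume
      = ENNReal.ofReal (Real.sqrt 3 / 2)
          * ∫⁻ t in Icc 0 (1/2), ENNReal.ofReal t * F t ∂volume := by
  have key := setLIntegral_lmap 1 (-(Real.sqrt 3)⁻¹) 0 (2*(Real.sqrt 3)⁻¹) Φdet_ne
    (fun b => F (b.1 + b.2)) (hF.comp (measurable_fst.add measurable_snd)) meas_C1β
  rw [Φdet_absinv] at key
  rw [show (Φ : (ℝ×ℝ) →ₗ[ℝ] (ℝ×ℝ)) = lmap 1 (-(Real.sqrt 3)⁻¹) 0 (2*(Real.sqrt 3)⁻¹) from rfl,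
    key]
  congr 1
  have hC : C1β = {p : ℝ×ℝ | 0 ≤ p.1 ∧ 0 ≤ p.2 ∧ p.1 + p.2 ≤ 1/2} := rfl
  rw [hC, corner_lintegral (1/2) F hF]

lemma outer1 (F : ℝ → ℝ≥0∞) (hF : Measurable F) :
    ∫⁻ x in Φ ⁻¹' C2β, F (1 - (Φ x).1) ∂volume
      = ENNReal.ofReal (Real.sqrt 3 / 2)
          * ∫⁻ t in Icc 0 (1/2), ENNReal.ofReal t * F t ∂volume := by
  have hg : Measurable (fun b : ℝ×ℝ => F (1 - b.1)) :=
    hF.comp (measurable_const.sub measurable_fst)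
  have key := setLIntegral_lmap 1 (-(Real.sqrt 3)⁻¹) 0 (2*(Real.sqrt 3)⁻¹) Φdet_ne
    (fun b => F (1 - b.1)) hg meas_C2β
  rw [Φdet_absinv] at key
  rw [show (Φ : (ℝ×ℝ) →ₗ[ℝ] (ℝ×ℝ)) = lmap 1 (-(Real.sqrt 3)⁻¹) 0 (2*(Real.sqrt 3)⁻¹) from rfl,
    key]
  congr 1
  have haff := setLIntegral_affine (-1) (-1) 0 1 ((1:ℝ),(0:ℝ)) (by norm_num)
    (fun b => F (1 - b.1)) hg meas_C2β
  rw [← haff]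
  have hpre : (fun p : ℝ×ℝ => lmap (-1) (-1) 0 1 p + ((1:ℝ),(0:ℝ))) ⁻¹' C2β
      = {p : ℝ×ℝ | 0 ≤ p.1 ∧ 0 ≤ p.2 ∧ p.1 + p.2 ≤ 1/2} := by
    ext q
    simp only [mem_preimage, lmap_apply, C2β, mem_setOf_eq, Prod.fst_add, Prod.snd_add]
    norm_num
    constructor
    · rintro ⟨a,b,c⟩; exact ⟨by linarith, b, by linarith⟩
    · rintro ⟨a,b,c⟩; exact ⟨by linarith, b, by linarith⟩
  have hval : ∀ q : ℝ×ℝ, (1 - (lmap (-1) (-1) 0 1 q + ((1:ℝ),(0:ℝ))).1) = q.1 + q.2 := by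
    intro q
    simp only [Prod.fst_add, lmap_apply]
    ring
  simp only [hval, hpre]
  rw [corner_lintegral (1/2) F hF]

lemma outer2 (F : ℝ → ℝ≥0∞) (hF : Measurable F) :
    ∫⁻ x in Φ ⁻¹' C3β, F (1 - (Φ x).2) ∂volume
      = ENNReal.ofReal (Real.sqrt 3 / 2)
          * ∫⁻ t in Icc 0 (1/2), ENNReal.ofReal t * F t ∂volume := by
  have hg : Measurable (fun b : ℝ×ℝ => F (1 - b.2)) :=
    hF.comp (measurable_const.sub measurable_snd)
  have key := setLIntegral_lmap 1 (-(Real.sqrt 3)⁻¹) 0 (2*(Real.sqrt 3)⁻¹) Φdet_ne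
    (fun b => F (1 - b.2)) hg meas_C3β
  rw [Φdet_absinv] at key
  rw [show (Φ : (ℝ×ℝ) →ₗ[ℝ] (ℝ×ℝ)) = lmap 1 (-(Real.sqrt 3)⁻¹) 0 (2*(Real.sqrt 3)⁻¹) from rfl,
    key]
  congr 1
  have haff := setLIntegral_affine 0 1 (-1) (-1) ((0:ℝ),(1:ℝ)) (by norm_num)
    (fun b => F (1 - b.2)) hg meas_C3β
  rw [← haff]
  have hpre : (fun p : ℝ×ℝ => lmap 0 1 (-1) (-1) p + ((0:ℝ),(1:ℝ))) ⁻¹' C3β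
      = {p : ℝ×ℝ | 0 ≤ p.1 ∧ 0 ≤ p.2 ∧ p.1 + p.2 ≤ 1/2} := by
    ext q
    simp only [mem_preimage, lmap_apply, C3β, mem_setOf_eq, Prod.fst_add, Prod.snd_add]
    norm_num
    constructor
    · rintro ⟨a,b,c⟩; exact ⟨by linarith, a, by linarith⟩
    · rintro ⟨a,b,c⟩; exact ⟨b, by linarith, by linarith⟩
  have hval : ∀ q : ℝ×ℝ, (1 - (lmap 0 1 (-1) (-1) q + ((0:ℝ),(1:ℝ))).2) = q.1 + q.2 := by
    intro q
    simp only [Prod.snd_add, lmap_apply]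
    ring
  simp only [hval, hpre]
  rw [corner_lintegral (1/2) F hF]
end AP

namespace AP
lemma half_sq : Real.sqrt 3 / 2 * (Real.sqrt 3 / 2) = 3/4 := by
  rw [div_mul_div_comm, s3mul]
  norm_num

lemma null_pre (p : ℝ×ℝ) : volume (Φ ⁻¹' ({p} : Set (ℝ×ℝ))) = 0 := by
  rw [vol_preimage_Φ, vol_pt, mul_zero]

lemma outer_total (r : ℝ) (hr : 1 ≤ r) :
    ∫⁻ x in Tass (Real.sqrt 3 / 12), volume (N r x ∩ Tass (Real.sqrt 3 / 12)) ∂volume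
      = 3 * (ENNReal.ofReal (3/4)
          * ∫⁻ t in Icc 0 (1/2), ENNReal.ofReal t * hfun (r*t) ∂volume) := by
  set J := ∫⁻ t in Icc 0 (1/2), ENNReal.ofReal t * hfun (r*t) ∂volume with hJ
  have hFm : Measurable (fun t : ℝ => hfun (r*t)) :=
    hfun_meas.comp (measurable_id.const_mul r)
  set D1 : Set (ℝ×ℝ) := Φ ⁻¹' C1β with hD1
  set P2 : Set (ℝ×ℝ) := Φ ⁻¹' C2β with hP2
  set P3 : Set (ℝ×ℝ) := Φ ⁻¹' C3β with hP3
  have hD1m : MeasurableSet D1 := meas_Φ meas_C1β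
  have hP2m : MeasurableSet P2 := meas_Φ meas_C2β
  have hP3m : MeasurableSet P3 := meas_Φ meas_C3β
  have hsplit : Tass (Real.sqrt 3 / 12) = (D1 ∪ (P2 \ D1)) ∪ (P3 \ (D1 ∪ P2)) := by
    rw [Tass_eq]
    ext x
    simp only [hD1, hP2, hP3, mem_preimage, mem_union, mem_diff]
    tauto
  have hDU : D1 ∪ (P2 \ D1) = D1 ∪ P2 := by
    ext x
    simp only [mem_union, mem_diff]
    tauto
  have hres : volume.restrict (Tass (Real.sqrt 3 / 12))
      = volume.restrict ((D1 ∪ (P2 \ D1)) ∪ (P3 \ (D1 ∪ P2))) := by rw [← hsplit]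
  rw [hres, lintegral_union (hP3m.diff (hD1m.union hP2m))
    (by rw [hDU]; exact disjoint_sdiff_right),
    lintegral_union (hP2m.diff hD1m) disjoint_sdiff_right]
  have piece1 : ∫⁻ x in D1, volume (N r x ∩ Tass (Real.sqrt 3 / 12)) ∂volume
      = ENNReal.ofReal (3/4) * J := by
    rw [setLIntegral_congr_fun hD1m (fun x hx => by
      have hx' : Φ x ∈ C1β := hx
      exact vol_inner0 r x (jmax0 x hx')
        (mul_nonneg (by linarith) (add_nonneg hx'.1 hx'.2.1)))]
    rw [lintegral_const_mul' _ _ ENNReal.ofReal_ne_top]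
    rw [hD1, outer0 (fun t => hfun (r*t)) hFm, ← mul_assoc,
      ← ENNReal.ofReal_mul (by positivity), half_sq]
  have piece2 : ∫⁻ x in P2 \ D1, volume (N r x ∩ Tass (Real.sqrt 3 / 12)) ∂volume
      = ENNReal.ofReal (3/4) * J := by
    rw [setLIntegral_congr_fun (hP2m.diff hD1m) (fun x hx => by
      have hx2 : Φ x ∈ C2β := hx.1
      have hx1 : Φ x ∉ C1β := hx.2
      refine vol_inner1 r x (jmax1 x hx2 hx1) (mul_nonneg (by linarith) ?_)
      have h1 := hx2.2.1
      have h2 := hx2.2.2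
      linarith)]
    have hae : (P2 \ D1 : Set (ℝ×ℝ)) =ᵐ[volume] P2 := by
      rw [MeasureTheory.ae_eq_set]
      constructor
      · exact measure_mono_null (fun x hx => (hx.2 hx.1.1).elim) measure_empty
      · refine measure_mono_null (t := Φ ⁻¹' ({((1:ℝ)/2, (0:ℝ))} : Set (ℝ×ℝ)))
          (fun x hx => ?_) (null_pre _)
        have hxD : x ∈ D1 := by
          by_contra hcon
          exact hx.2 ⟨hx.1, hcon⟩
        exact C12 ⟨hxD, hx.1⟩
    rw [setLIntegral_congr hae]
    rw [lintegral_const_mul' _ _ ENNReal.ofReal_ne_top]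
    rw [hP2, outer1 (fun t => hfun (r*t)) hFm, ← mul_assoc,
      ← ENNReal.ofReal_mul (by positivity), half_sq]
  have piece3 : ∫⁻ x in P3 \ (D1 ∪ P2), volume (N r x ∩ Tass (Real.sqrt 3 / 12)) ∂volume
      = ENNReal.ofReal (3/4) * J := by
    rw [setLIntegral_congr_fun (hP3m.diff (hD1m.union hP2m)) (fun x hx => by
      have hx3 : Φ x ∈ C3β := hx.1
      have hx1 : Φ x ∉ C1β := fun h => hx.2 (Or.inl h)
      have hx2 : Φ x ∉ C2β := fun h => hx.2 (Or.inr h)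
      refine vol_inner2 r x (jmax2 x hx3 hx1 hx2) (mul_nonneg (by linarith) ?_)
      have h1 := hx3.1
      have h2 := hx3.2.2
      linarith)]
    have hae : (P3 \ (D1 ∪ P2) : Set (ℝ×ℝ)) =ᵐ[volume] P3 := by
      rw [MeasureTheory.ae_eq_set]
      constructor
      · exact measure_mono_null (fun x hx => (hx.2 hx.1.1).elim) measure_empty
      · refine measure_mono_null (t := Φ ⁻¹' ({((0:ℝ), (1:ℝ)/2)} : Set (ℝ×ℝ))
            ∪ Φ ⁻¹' ({((1:ℝ)/2, (1:ℝ)/2)} : Set (ℝ×ℝ))) (fun x hx => ?_)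
          (measure_union_null (null_pre _) (null_pre _))
        have hxD : x ∈ D1 ∪ P2 := by
          by_contra hcon
          exact hx.2 ⟨hx.1, hcon⟩
        rcases hxD with h|h
        · exact Or.inl (C13 ⟨h, hx.1⟩)
        · exact Or.inr (C23 ⟨h, hx.1⟩)
    rw [setLIntegral_congr hae]
    rw [lintegral_const_mul' _ _ ENNReal.ofReal_ne_top]
    rw [hP3, outer2 (fun t => hfun (r*t)) hFm, ← mul_assoc,
      ← ENNReal.ofReal_mul (by positivity), half_sq]
  rw [piece1, piece2, piece3]
  ring

lemma muA_eq (r : ℝ) (hr : 1 ≤ r) :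
    muA r (Real.sqrt 3 / 12)
      = ((ENNReal.ofReal (3*Real.sqrt 3/16))⁻¹ * ((ENNReal.ofReal (3*Real.sqrt 3/16))⁻¹
          * (3 * (ENNReal.ofReal (3/4)
              * ∫⁻ t in Icc 0 (1/2), ENNReal.ofReal t * hfun (r*t) ∂volume)))).toReal := by
  unfold muA unif
  rw [vol_Tass]
  rw [Measure.prod_apply (meas_Sset r)]
  rw [lintegral_smul_measure]
  simp only [Measure.smul_apply, smul_eq_mul]
  rw [lintegral_const_mul' _ _ (by
    simp only [ne_eq, ENNReal.inv_eq_top]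
    exact (ENNReal.ofReal_pos.2 (by positivity)).ne')]
  congr 3
  have hpt : ∀ x : ℝ×ℝ, (Prod.mk x ⁻¹' {p : (ℝ×ℝ)×(ℝ×ℝ) | p.2 ∈ N r p.1}) = N r x := by
    intro x
    rfl
  calc ∫⁻ x, volume.restrict (Tass (Real.sqrt 3 / 12))
          (Prod.mk x ⁻¹' {p : (ℝ×ℝ)×(ℝ×ℝ) | p.2 ∈ N r p.1})
        ∂(volume.restrict (Tass (Real.sqrt 3 / 12)))
      = ∫⁻ x in Tass (Real.sqrt 3 / 12), volume (N r x ∩ Tass (Real.sqrt 3 / 12)) ∂volume := by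
        apply lintegral_congr
        intro x
        rw [hpt x, Measure.restrict_apply (meas_N r x)]
    _ = 3 * (ENNReal.ofReal (3/4)
          * ∫⁻ t in Icc 0 (1/2), ENNReal.ofReal t * hfun (r*t) ∂volume) := outer_total r hr
end AP

namespace AP
lemma lint_poly_Icc (a b A B C D : ℝ) (hab : a ≤ b)
    (h0 : ∀ t ∈ Icc a b, 0 ≤ A + B*t + C*t^2 + D*t^3) :
    ∫⁻ t in Icc a b, ENNReal.ofReal (A + B*t + C*t^2 + D*t^3) ∂volume
      = ENNReal.ofReal ((A*b + B/2*b^2 + C/3*b^3 + D/4*b^4)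
          - (A*a + B/2*a^2 + C/3*a^3 + D/4*a^4)) := by
  rw [lint_Icc_eq a b hab _ (by continuity) h0, ftc_cubic]

lemma lint_poly_Ioc (a b A B C D : ℝ) (hab : a ≤ b)
    (h0 : ∀ t ∈ Icc a b, 0 ≤ A + B*t + C*t^2 + D*t^3) :
    ∫⁻ t in Ioc a b, ENNReal.ofReal (A + B*t + C*t^2 + D*t^3) ∂volume
      = ENNReal.ofReal ((A*b + B/2*b^2 + C/3*b^3 + D/4*b^4)
          - (A*a + B/2*a^2 + C/3*a^3 + D/4*a^4)) := by
  rw [lint_Ioc_eq a b hab _ (by continuity) h0, ftc_cubic]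

lemma hlow (r t : ℝ) (ht : 0 ≤ t) (hs : r*t ≤ 1/2) :
    ENNReal.ofReal t * hfun (r*t) = ENNReal.ofReal (0 + 0*t + 0*t^2 + (r^2/2)*t^3) := by
  unfold hfun
  rw [min_eq_left hs, min_eq_left (by linarith : r*t ≤ 1),
    max_eq_right (by linarith : r*t - 1/2 ≤ 0)]
  rw [show ((0:ℝ)^2/2) = 0 by norm_num, ENNReal.ofReal_zero, add_zero, add_zero,
    ← ENNReal.ofReal_mul ht]
  exact congrArg ENNReal.ofReal (by ring)

lemma hmid (r t : ℝ) (ht : 0 ≤ t) (h1 : 1/2 ≤ r*t) (h2 : r*t ≤ 1) :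
    ENNReal.ofReal t * hfun (r*t)
      = ENNReal.ofReal (0 + (3/8)*t + (-r)*t^2 + (r^2)*t^3) := by
  unfold hfun
  rw [min_eq_right h1, min_eq_left h2, max_eq_left (by linarith)]
  rw [← ENNReal.ofReal_add (by positivity) (by positivity),
    ← ENNReal.ofReal_add (by positivity) (by positivity), ← ENNReal.ofReal_mul ht]
  exact congrArg ENNReal.ofReal (by ring)

lemma hhig (r t : ℝ) (ht : 0 ≤ t) (h1 : 1 ≤ r*t) :
    ENNReal.ofReal t * hfun (r*t)
      = ENNReal.ofReal (0 + (3/8)*t + 0*t^2 + 0*t^3) := by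
  unfold hfun
  rw [min_eq_right (by linarith), min_eq_right h1, max_eq_left (by norm_num)]
  rw [← ENNReal.ofReal_add (by positivity) (by positivity),
    ← ENNReal.ofReal_add (by positivity) (by positivity), ← ENNReal.ofReal_mul ht]
  exact congrArg ENNReal.ofReal (by ring)

lemma J_eval_lo (r : ℝ) (hr1 : 1 ≤ r) (hr2 : r < 2) :
    ∫⁻ t in Icc 0 (1/2), ENNReal.ofReal t * hfun (r*t) ∂volume
      = ENNReal.ofReal (1/(128*r^2))
        + ENNReal.ofReal (3/64 - r/24 + r^2/64 - 1/(48*r^2)) := by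
  have hr0 : (0:ℝ) < r := by linarith
  have hrne : r ≠ 0 := ne_of_gt hr0
  set m : ℝ := 1/(2*r) with hm_def
  have hm0 : 0 ≤ m := by positivity
  have hm : m ≤ 1/2 := by
    rw [hm_def, div_le_div_iff₀ (by linarith) (by norm_num)]
    linarith
  have hrm : r * m = 1/2 := by
    rw [hm_def]
    field_simp
  rw [lint_split 0 m (1/2) hm0 hm]
  have p1 : ∫⁻ t in Icc 0 m, ENNReal.ofReal t * hfun (r*t) ∂volume
      = ENNReal.ofReal (1/(128*r^2)) := by
    rw [setLIntegral_congr_fun measurableSet_Icc (fun t ht =>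
      hlow r t ht.1 (by nlinarith [ht.2]))]
    rw [lint_poly_Icc 0 m 0 0 0 (r^2/2) hm0 (fun t ht => by nlinarith [pow_nonneg ht.1 3])]
    exact congrArg ENNReal.ofReal (by rw [hm_def]; field_simp; ring)
  have p2 : ∫⁻ t in Ioc m (1/2), ENNReal.ofReal t * hfun (r*t) ∂volume
      = ENNReal.ofReal (3/64 - r/24 + r^2/64 - 1/(48*r^2)) := by
    rw [setLIntegral_congr_fun measurableSet_Ioc (fun t ht => by
      have ht0 : 0 ≤ t := le_trans hm0 (le_of_lt ht.1)
      exact hmid r t ht0 (by nlinarith [ht.1]) (by nlinarith [ht.2]))]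
    rw [lint_poly_Ioc m (1/2) 0 (3/8) (-r) (r^2) hm (fun t ht => by
      have ht0 : 0 ≤ t := le_trans hm0 ht.1
      nlinarith [mul_nonneg ht0 (sq_nonneg (r*t - 1/2))])]
    exact congrArg ENNReal.ofReal (by rw [hm_def]; field_simp; ring)
  rw [p1, p2]

lemma J_eval_hi (r : ℝ) (hr2 : 2 ≤ r) :
    ∫⁻ t in Icc 0 (1/2), ENNReal.ofReal t * hfun (r*t) ∂volume
      = ENNReal.ofReal (1/(128*r^2)) + ENNReal.ofReal (1/(12*r^2))
        + ENNReal.ofReal (3/64 - 3/(16*r^2)) := by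
  have hr0 : (0:ℝ) < r := by linarith
  have hrne : r ≠ 0 := ne_of_gt hr0
  set m1 : ℝ := 1/(2*r) with hm1_def
  set m2 : ℝ := 1/r with hm2_def
  have hm10 : 0 ≤ m1 := by positivity
  have hm12 : m1 ≤ m2 := by
    rw [hm1_def, hm2_def, div_le_div_iff₀ (by linarith) (by linarith)]
    nlinarith
  have hm2h : m2 ≤ 1/2 := by
    rw [hm2_def, div_le_div_iff₀ (by linarith) (by norm_num)]
    linarith
  have hrm1 : r * m1 = 1/2 := by rw [hm1_def]; field_simp
  have hrm2 : r * m2 = 1 := by rw [hm2_def]; field_simp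
  rw [lint_split3 0 m1 m2 (1/2) hm10 hm12 hm2h]
  have p1 : ∫⁻ t in Icc 0 m1, ENNReal.ofReal t * hfun (r*t) ∂volume
      = ENNReal.ofReal (1/(128*r^2)) := by
    rw [setLIntegral_congr_fun measurableSet_Icc (fun t ht =>
      hlow r t ht.1 (by nlinarith [ht.2]))]
    rw [lint_poly_Icc 0 m1 0 0 0 (r^2/2) hm10 (fun t ht => by nlinarith [pow_nonneg ht.1 3])]
    exact congrArg ENNReal.ofReal (by rw [hm1_def]; field_simp; ring)
  have p2 : ∫⁻ t in Ioc m1 m2, ENNReal.ofReal t * hfun (r*t) ∂volume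
      = ENNReal.ofReal (1/(12*r^2)) := by
    rw [setLIntegral_congr_fun measurableSet_Ioc (fun t ht => by
      have ht0 : 0 ≤ t := le_trans hm10 (le_of_lt ht.1)
      exact hmid r t ht0 (by nlinarith [ht.1]) (by nlinarith [ht.2]))]
    rw [lint_poly_Ioc m1 m2 0 (3/8) (-r) (r^2) hm12 (fun t ht => by
      have ht0 : 0 ≤ t := le_trans hm10 ht.1
      nlinarith [mul_nonneg ht0 (sq_nonneg (r*t - 1/2))])]
    exact congrArg ENNReal.ofReal (by rw [hm1_def, hm2_def]; field_simp; ring)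
  have p3 : ∫⁻ t in Ioc m2 (1/2), ENNReal.ofReal t * hfun (r*t) ∂volume
      = ENNReal.ofReal (3/64 - 3/(16*r^2)) := by
    rw [setLIntegral_congr_fun measurableSet_Ioc (fun t ht => by
      have ht0 : 0 ≤ t := le_trans (by positivity : (0:ℝ) ≤ m2) (le_of_lt ht.1)
      exact hhig r t ht0 (by nlinarith [ht.1]))]
    rw [lint_poly_Ioc m2 (1/2) 0 (3/8) 0 0 hm2h (fun t ht => by
      have ht0 : 0 ≤ t := le_trans (by positivity : (0:ℝ) ≤ m2) ht.1
      nlinarith)]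
    exact congrArg ENNReal.ofReal (by rw [hm2_def]; field_simp; ring)
  rw [p1, p2, p3]

lemma hcc : ((3*Real.sqrt 3/16)⁻¹ : ℝ) * (3*Real.sqrt 3/16)⁻¹ = 256/27 := by
  rw [← mul_inv, div_mul_div_comm,
    show (3*Real.sqrt 3)*(3*Real.sqrt 3) = 27 by linear_combination 9*s3mul]
  norm_num
end AP


/-- The arc probability under association with `ε = √3/12`, piecewise in `r`. -/
theorem arc_probability_association_twelfth (r : ℝ) :
    (r ∈ Set.Ico (1 : ℝ) 2 →
      muA r (Real.sqrt 3 / 12) =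
        (6 * r ^ 4 - 16 * r ^ 3 + 18 * r ^ 2 - 5) / (18 * r ^ 2)) ∧
    (r ∈ Set.Ici (2 : ℝ) →
      muA r (Real.sqrt 3 / 12) = 1 - 37 / 18 * (r ^ 2)⁻¹) := by
  have hc0 : (0:ℝ) < 3*Real.sqrt 3/16 := by positivity
  constructor
  · rintro ⟨hr1, hr2⟩
    have hr0 : (0:ℝ) < r := by linarith
    have hrne : r ≠ 0 := ne_of_gt hr0
    rw [AP.muA_eq r hr1, AP.J_eval_lo r hr1 hr2]
    have hV1 : (0:ℝ) ≤ 1/(128*r^2) := by positivity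
    have hV2 : (0:ℝ) ≤ 3/64 - r/24 + r^2/64 - 1/(48*r^2) := by
      have key : 3/64 - r/24 + r^2/64 - 1/(48*r^2)
          = (r-1)*(3*r^3 - 5*r^2 + 4*r + 4)/(192*r^2) := by
        field_simp
        ring
      rw [key]
      apply div_nonneg _ (by positivity)
      apply mul_nonneg (by linarith)
      nlinarith
    rw [← ENNReal.ofReal_add hV1 hV2,
      ← ENNReal.ofReal_mul (by norm_num : (0:ℝ) ≤ 3/4),
      show (3:ℝ≥0∞) = ENNReal.ofReal (3:ℝ) from (ENNReal.ofReal_ofNat 3).symm,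
      ← ENNReal.ofReal_mul (by norm_num : (0:ℝ) ≤ 3),
      ← ENNReal.ofReal_inv_of_pos hc0,
      ← ENNReal.ofReal_mul (by positivity),
      ← ENNReal.ofReal_mul (by positivity)]
    rw [ENNReal.toReal_ofReal (by
      apply mul_nonneg (by positivity)
      apply mul_nonneg (by positivity)
      apply mul_nonneg (by norm_num)
      apply mul_nonneg (by norm_num)
      linarith)]
    rw [← mul_assoc, AP.hcc]
    field_simp
    ring
  · intro hr2
    have hr1 : (1:ℝ) ≤ r := by
      have : (2:ℝ) ≤ r := hr2
      linarith
    have hr0 : (0:ℝ) < r := by linarith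
    have hrne : r ≠ 0 := ne_of_gt hr0
    have h2r : (2:ℝ) ≤ r := hr2
    rw [AP.muA_eq r hr1, AP.J_eval_hi r h2r]
    have hV1 : (0:ℝ) ≤ 1/(128*r^2) := by positivity
    have hV2 : (0:ℝ) ≤ 1/(12*r^2) := by positivity
    have hV3 : (0:ℝ) ≤ 3/64 - 3/(16*r^2) := by
      have key : 3/(16*r^2) ≤ 3/64 := by
        rw [div_le_div_iff₀ (by positivity) (by norm_num)]
        nlinarith
      linarith
    rw [← ENNReal.ofReal_add hV1 hV2, ← ENNReal.ofReal_add (by linarith) hV3,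
      ← ENNReal.ofReal_mul (by norm_num : (0:ℝ) ≤ 3/4),
      show (3:ℝ≥0∞) = ENNReal.ofReal (3:ℝ) from (ENNReal.ofReal_ofNat 3).symm,
      ← ENNReal.ofReal_mul (by norm_num : (0:ℝ) ≤ 3),
      ← ENNReal.ofReal_inv_of_pos hc0,
      ← ENNReal.ofReal_mul (by positivity),
      ← ENNReal.ofReal_mul (by positivity)]
    rw [ENNReal.toReal_ofReal (by
      apply mul_nonneg (by positivity)
      apply mul_nonneg (by positivity)
      apply mul_nonneg (by norm_num)
      apply mul_nonneg (by norm_num)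
      linarith)]
    rw [← mul_assoc, AP.hcc]
    field_simp
    ring
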